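/- Let λ₁, λ₂ > 0, m ∈ ℂ, θ ∈ ℝ with sin(2θ) ≠ 0, and let A be the 4×4 matrix from the two-dimensional causality proof: diag entries (1/2)√(λ₂/λ₁)|m|csc²θ, (1/2)√(λ₁/λ₂)|m|csc²θ, (1/2)√(λ₂/λ₁)|m|sec²θ, (1/2)√(λ₁/λ₂)|m|sec²θ, with A₁₄ = m·csc(2θ), A₂₃ = -m·csc(2θ), A₃₂ = conj(A₂₃), A₄₁ = conj(A₁₄), all other entries zero. Then det A = 0 and the sum of the 3×3 principal minors of A equals 0. -/

import Mathlib

open Matrix Real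

/-- The 4×4 matrix from Appendix A of the two-dimensional causality proof. -/
noncomputable def appendixAMatrix (lam1 lam2 : ℝ) (m : ℂ) (θ : ℝ) : Matrix (Fin 4) (Fin 4) ℂ :=
  !![(((1/2) * Real.sqrt (lam2/lam1) * ‖m‖ / (Real.sin θ)^2 : ℝ) : ℂ), 0, 0,
        m / (Real.sin (2*θ));
     0, (((1/2) * Real.sqrt (lam1/lam2) * ‖m‖ / (Real.sin θ)^2 : ℝ) : ℂ),
        -(m / (Real.sin (2*θ))), 0;
     0, -((starRingEnd ℂ) m / (Real.sin (2*θ))),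
        (((1/2) * Real.sqrt (lam2/lam1) * ‖m‖ / (Real.cos θ)^2 : ℝ) : ℂ), 0;
     (starRingEnd ℂ) m / (Real.sin (2*θ)), 0, 0,
        (((1/2) * Real.sqrt (lam1/lam2) * ‖m‖ / (Real.cos θ)^2 : ℝ) : ℂ)]

lemma main_aux (a b c d x y : ℂ) (had : a*d = x*y) (hbc : b*c = x*y) :
    (!![a,0,0,x; 0,b,-x,0; 0,-y,c,0; y,0,0,d] : Matrix (Fin 4) (Fin 4) ℂ).det = 0 ∧
    (∑ i : Fin 4, ((!![a,0,0,x; 0,b,-x,0; 0,-y,c,0; y,0,0,d] : Matrix (Fin 4) (Fin 4) ℂ).submatrix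
      i.succAbove i.succAbove).det) = 0 := by
  constructor
  · have hdet : (!![a,0,0,x; 0,b,-x,0; 0,-y,c,0; y,0,0,d] : Matrix (Fin 4) (Fin 4) ℂ).det
        = (a*d - x*y) * (b*c - x*y) := by
      simp +decide [Matrix.det_succ_row_zero, Fin.sum_univ_succ, Fin.succAbove, Fin.castSucc,
        Fin.castAdd, Fin.castLE]
      ring
    rw [hdet, had, hbc]; ring
  · rw [Fin.sum_univ_four]
    have e0 : ((!![a,0,0,x; 0,b,-x,0; 0,-y,c,0; y,0,0,d] : Matrix (Fin 4) (Fin 4) ℂ).submatrix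
        (0:Fin 4).succAbove (0:Fin 4).succAbove) = !![b,-x,0; -y,c,0; 0,0,d] := by
      ext i j; fin_cases i <;> fin_cases j <;> rfl
    have e1 : ((!![a,0,0,x; 0,b,-x,0; 0,-y,c,0; y,0,0,d] : Matrix (Fin 4) (Fin 4) ℂ).submatrix
        (1:Fin 4).succAbove (1:Fin 4).succAbove) = !![a,0,x; 0,c,0; y,0,d] := by
      ext i j; fin_cases i <;> fin_cases j <;> rfl
    have e2 : ((!![a,0,0,x; 0,b,-x,0; 0,-y,c,0; y,0,0,d] : Matrix (Fin 4) (Fin 4) ℂ).submatrix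
        (2:Fin 4).succAbove (2:Fin 4).succAbove) = !![a,0,x; 0,b,0; y,0,d] := by
      ext i j; fin_cases i <;> fin_cases j <;> rfl
    have e3 : ((!![a,0,0,x; 0,b,-x,0; 0,-y,c,0; y,0,0,d] : Matrix (Fin 4) (Fin 4) ℂ).submatrix
        (3:Fin 4).succAbove (3:Fin 4).succAbove) = !![a,0,0; 0,b,-x; 0,-y,c] := by
      ext i j; fin_cases i <;> fin_cases j <;> rfl
    rw [e0, e1, e2, e3]
    simp [Matrix.det_fin_three]
    linear_combination (a+d)*hbc + (b+c)*had

theorem stmt_1 (lam1 lam2 : ℝ) (hlam1 : 0 < lam1) (hlam2 : 0 < lam2)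
    (m : ℂ) (θ : ℝ) (hθ : Real.sin (2*θ) ≠ 0) :
    (appendixAMatrix lam1 lam2 m θ).det = 0 ∧
    (∑ i : Fin 4,
      ((appendixAMatrix lam1 lam2 m θ).submatrix i.succAbove i.succAbove).det) = 0 := by
  have h2 : Real.sin (2*θ) = 2 * Real.sin θ * Real.cos θ := Real.sin_two_mul θ
  have hs : Real.sin θ ≠ 0 := fun h => hθ (by rw [h2, h]; ring)
  have hc : Real.cos θ ≠ 0 := fun h => hθ (by rw [h2, h]; ring)
  have hsC : ((Real.sin θ : ℝ) : ℂ) ≠ 0 := by exact_mod_cast hs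
  have hcC : ((Real.cos θ : ℝ) : ℂ) ≠ 0 := by exact_mod_cast hc
  have h2C : ((Real.sin (2*θ) : ℝ) : ℂ) = 2 * (Real.sin θ : ℝ) * (Real.cos θ : ℝ) := by
    rw [h2]; push_cast; ring
  have h2θC : ((Real.sin (2*θ) : ℝ) : ℂ) ≠ 0 := by exact_mod_cast hθ
  have h1C : ((Real.sqrt (lam2/lam1) : ℝ) : ℂ) * ((Real.sqrt (lam1/lam2) : ℝ) : ℂ) = 1 := by
    rw [← Complex.ofReal_mul, ← Real.sqrt_mul (by positivity),
      show lam2/lam1 * (lam1/lam2) = 1 by field_simp, Real.sqrt_one, Complex.ofReal_one]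
  have hm : m * (starRingEnd ℂ) m = ((‖m‖ : ℝ) : ℂ)^2 := by
    rw [Complex.mul_conj]; norm_cast; rw [Complex.sq_norm]
  have had : (((1/2) * Real.sqrt (lam2/lam1) * ‖m‖ / (Real.sin θ)^2 : ℝ) : ℂ) *
      (((1/2) * Real.sqrt (lam1/lam2) * ‖m‖ / (Real.cos θ)^2 : ℝ) : ℂ)
      = (m / (Real.sin (2*θ))) * ((starRingEnd ℂ) m / (Real.sin (2*θ))) := by
    simp only [Complex.ofReal_div, Complex.ofReal_mul, Complex.ofReal_pow,
      Complex.ofReal_one, Complex.ofReal_ofNat]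
    rw [div_mul_div_comm, div_mul_div_comm, div_eq_div_iff
      (by exact mul_ne_zero (pow_ne_zero _ hsC) (pow_ne_zero _ hcC))
      (by exact mul_ne_zero h2θC h2θC), h2C]
    linear_combination (((Real.sin θ:ℝ):ℂ)^2 * ((Real.cos θ:ℝ):ℂ)^2) *
      ((((‖m‖ : ℝ):ℂ))^2 * h1C - hm)
  have hbc : (((1/2) * Real.sqrt (lam1/lam2) * ‖m‖ / (Real.sin θ)^2 : ℝ) : ℂ) *
      (((1/2) * Real.sqrt (lam2/lam1) * ‖m‖ / (Real.cos θ)^2 : ℝ) : ℂ)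
      = (m / (Real.sin (2*θ))) * ((starRingEnd ℂ) m / (Real.sin (2*θ))) := by
    simp only [Complex.ofReal_div, Complex.ofReal_mul, Complex.ofReal_pow,
      Complex.ofReal_one, Complex.ofReal_ofNat]
    rw [div_mul_div_comm, div_mul_div_comm, div_eq_div_iff
      (by exact mul_ne_zero (pow_ne_zero _ hsC) (pow_ne_zero _ hcC))
      (by exact mul_ne_zero h2θC h2θC), h2C]
    linear_combination (((Real.sin θ:ℝ):ℂ)^2 * ((Real.cos θ:ℝ):ℂ)^2) *
      ((((‖m‖ : ℝ):ℂ))^2 * h1C - hm)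
  have := main_aux _ _ _ _ (m / (Real.sin (2*θ))) ((starRingEnd ℂ) m / (Real.sin (2*θ))) had hbc
  exact this
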